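/- For every integer k ≥ 3 there exist positive real constants A_k and B_k such that for all natural numbers n ≥ k and all m ≤ n: |ω_{n,m,k}/C(n,k) − (1 − 2m/n)^k| ≤ (A_k/n)·|1 − 2m/n|^{k−2} + B_k/n². -/

import Mathlib

open Finset Filter

attribute [local instance] Classical.propDecidable

/-- `ω_{n,m,k} = ∑_{s=0}^{k} (−1)^s C(m,s) C(n−m,k−s)`. -/
def omegaW (n m k : ℕ) : ℤ :=
  ∑ s ∈ Finset.range (k + 1), (-1 : ℤ) ^ s * (m.choose s : ℤ) * ((n - m).choose (k - s) : ℤ)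

namespace OmegaAux

open Polynomial

lemma coeff_one_sub_X_pow (m s : ℕ) :
    ((1 - X : ℤ[X]) ^ m).coeff s = (-1 : ℤ) ^ s * (m.choose s : ℤ) := by
  have h : (1 - X : ℤ[X]) ^ m = ∑ i ∈ range (m+1), C ((-1:ℤ)^i * m.choose i) * X ^ i := by
    rw [sub_eq_add_neg, add_comm, add_pow]
    refine Finset.sum_congr rfl fun i _ => ?_
    rw [neg_pow]
    simp only [one_pow, mul_one, map_mul, map_pow, map_neg, map_one, map_natCast]
    ring
  rw [h, finset_sum_coeff]
  simp only [coeff_C_mul, coeff_X_pow, mul_ite, mul_one, mul_zero]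
  rw [Finset.sum_ite_eq (range (m+1)) s]
  by_cases hs : s ∈ range (m+1)
  · simp [hs]
  · simp only [hs, if_false]
    rw [Nat.choose_eq_zero_of_lt (by simpa using hs)]
    simp

lemma omegaW_eq_coeff (n m k : ℕ) :
    omegaW n m k = ((1 - X : ℤ[X]) ^ m * (1 + X) ^ (n - m)).coeff k := by
  rw [coeff_mul, Finset.Nat.sum_antidiagonal_eq_sum_range_succ_mk]
  unfold omegaW
  refine Finset.sum_congr rfl fun s _ => ?_
  rw [coeff_one_sub_X_pow, coeff_one_add_X_pow]

lemma coeff_one_sub_X_sq_pow_mul (m t k : ℕ) :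
    ((1 - X ^ 2 : ℤ[X]) ^ m * (1 + X) ^ t).coeff k
      = ∑ i ∈ range (m + 1), (-1 : ℤ) ^ i * (m.choose i : ℤ) *
          (if 2 * i ≤ k then (t.choose (k - 2 * i) : ℤ) else 0) := by
  have h : (1 - X ^ 2 : ℤ[X]) ^ m = ∑ i ∈ range (m+1), C ((-1:ℤ)^i * m.choose i) * X ^ (2*i) := by
    rw [sub_eq_add_neg, add_comm, add_pow]
    refine Finset.sum_congr rfl fun i _ => ?_
    rw [neg_pow, ← pow_mul]
    simp only [one_pow, mul_one, map_mul, map_pow, map_neg, map_one, map_natCast]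
    ring
  rw [h, Finset.sum_mul, finset_sum_coeff]
  refine Finset.sum_congr rfl fun i _ => ?_
  rw [show (C ((-1:ℤ)^i * m.choose i) * X ^ (2*i) * (1+X)^t)
      = C ((-1:ℤ)^i * m.choose i) * ((1+X)^t * X ^ (2*i)) by ring,
    coeff_C_mul, coeff_mul_X_pow']
  split_ifs with hle
  · rw [coeff_one_add_X_pow]
  · rw [mul_zero]

/-- key identity -/
theorem omegaW_eq (n m k : ℕ) (h : 2 * m ≤ n) :
    omegaW n m k = ∑ i ∈ range (k / 2 + 1),
      (-1 : ℤ) ^ i * (m.choose i : ℤ) * ((n - 2 * m).choose (k - 2 * i) : ℤ) := by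
  have hfac : (1 - X : ℤ[X]) ^ m * (1 + X) ^ (n - m)
      = (1 - X ^ 2 : ℤ[X]) ^ m * (1 + X) ^ (n - 2 * m) := by
    have hnm : n - m = m + (n - 2 * m) := by omega
    rw [hnm, pow_add, ← mul_assoc, ← mul_pow]
    have : (1 - X : ℤ[X]) * (1 + X) = 1 - X ^ 2 := by ring
    rw [this]
  rw [omegaW_eq_coeff, hfac, coeff_one_sub_X_sq_pow_mul]
  set g : ℕ → ℤ := fun i => (-1 : ℤ) ^ i * (m.choose i : ℤ) *
      (if 2 * i ≤ k then ((n - 2*m).choose (k - 2 * i) : ℤ) else 0) with hg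
  have h1 : ∑ i ∈ range (m + 1), g i = ∑ i ∈ range (m + k + 2), g i := by
    refine Finset.sum_subset (by intro x hx; simp at hx ⊢; omega) fun x _ hx => ?_
    simp only [mem_range, not_lt] at hx
    simp [hg, Nat.choose_eq_zero_of_lt (by omega : m < x)]
  have h2 : ∑ i ∈ range (k / 2 + 1), g i = ∑ i ∈ range (m + k + 2), g i := by
    refine Finset.sum_subset (by intro x hx; simp at hx ⊢; omega) fun x _ hx => ?_
    simp only [mem_range, not_lt] at hx
    have : ¬ 2 * x ≤ k := by omega
    simp [hg, this]
  rw [h1, ← h2]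
  refine Finset.sum_congr rfl fun i hi => ?_
  simp only [mem_range] at hi
  have : 2 * i ≤ k := by omega
  simp [hg, this]

/-- symmetry -/
theorem omegaW_symm (n m k : ℕ) (h : m ≤ n) :
    omegaW n (n - m) k = (-1 : ℤ) ^ k * omegaW n m k := by
  unfold omegaW
  rw [Finset.mul_sum, ← Finset.sum_range_reflect]
  refine Finset.sum_congr rfl fun s hs => ?_
  simp only [mem_range] at hs
  have e1 : k + 1 - 1 - s = k - s := by omega
  have e2 : n - (n - m) = m := by omega
  have e3 : k - (k - s) = s := by omega
  rw [e1, e2, e3]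
  have h4 : (-1 : ℤ) ^ (k - s) * (-1) ^ s = (-1) ^ k := by
    rw [← pow_add]; congr 1; omega
  have h6 : ((-1:ℤ) ^ s) * ((-1:ℤ) ^ s) = 1 := by rw [← mul_pow]; norm_num
  have h5 : (-1 : ℤ) ^ (k - s) = (-1) ^ k * (-1) ^ s := by
    calc (-1:ℤ) ^ (k-s) = (-1)^(k-s) * ((-1)^s * (-1)^s) := by rw [h6, mul_one]
      _ = (-1)^k * (-1)^s := by rw [← mul_assoc, h4]
  rw [h5]
  ring

/-- crude bound -/
theorem abs_omegaW_le (n m k : ℕ) (h : m ≤ n) : |omegaW n m k| ≤ (n.choose k : ℤ) := by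
  have hv : (n.choose k : ℤ) = ∑ s ∈ range (k+1), ((m.choose s : ℤ) * ((n-m).choose (k-s) : ℤ)) := by
    have := Nat.add_choose_eq m (n - m) k
    rw [Nat.add_sub_cancel' h] at this
    rw [this, Finset.Nat.sum_antidiagonal_eq_sum_range_succ_mk]
    push_cast
    rfl
  rw [hv]
  refine (Finset.abs_sum_le_sum_abs _ _).trans ?_
  refine Finset.sum_le_sum fun s _ => ?_
  rw [abs_mul, abs_mul]
  simp [abs_pow]

/-- telescoping product estimate -/
lemma prod_est (a c : ℕ → ℝ) (t : ℝ) : ∀ (K : ℕ), 0 ≤ t →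
    (∀ j < K, 0 ≤ a j ∧ a j ≤ t) → (∀ j < K, |a j - t| ≤ c j) →
    |∏ j ∈ range K, a j - t ^ K| ≤ (∑ j ∈ range K, c j) * t ^ (K - 1) := by
  intro K
  induction K with
  | zero => simp
  | succ K ih =>
    intro ht0 ha hc
    have IH := ih ht0 (fun j hj => ha j (by omega)) (fun j hj => hc j (by omega))
    have haK := ha K (by omega)
    have hcK := hc K (by omega)
    have hS0 : 0 ≤ ∑ j ∈ range K, c j := by
      refine Finset.sum_nonneg fun j hj => ?_
      simp only [mem_range] at hj
      exact (abs_nonneg _).trans (hc j (by omega))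
    have htK : (0:ℝ) ≤ t ^ K := pow_nonneg ht0 _
    rw [Finset.prod_range_succ, Finset.sum_range_succ, pow_succ, Nat.add_sub_cancel]
    have key : (∏ j ∈ range K, a j) * a K - t ^ K * t
        = a K * ((∏ j ∈ range K, a j) - t ^ K) + (a K - t) * t ^ K := by ring
    rw [key]
    calc |a K * ((∏ j ∈ range K, a j) - t ^ K) + (a K - t) * t ^ K|
        ≤ |a K| * |(∏ j ∈ range K, a j) - t ^ K| + |a K - t| * t ^ K := by
          refine (abs_add_le _ _).trans ?_
          rw [abs_mul, abs_mul, abs_of_nonneg htK]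
      _ ≤ t * ((∑ j ∈ range K, c j) * t ^ (K - 1)) + c K * t ^ K := by
          refine add_le_add (mul_le_mul (by rw [abs_of_nonneg haK.1]; exact haK.2) IH
            (abs_nonneg _) ht0) (mul_le_mul_of_nonneg_right hcK htK)
      _ ≤ (∑ j ∈ range K, c j) * t ^ K + c K * t ^ K := by
          refine add_le_add_left ?_ _
          rcases Nat.eq_zero_or_pos K with h | h
          · subst h; simp
          · have ht : t * t ^ (K - 1) = t ^ K := by
              rw [← pow_succ']; congr 1; omega
            calc t * ((∑ j ∈ range K, c j) * t ^ (K - 1))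
                = (∑ j ∈ range K, c j) * (t * t ^ (K - 1)) := by ring
              _ = (∑ j ∈ range K, c j) * t ^ K := by rw [ht]
              _ ≤ (∑ j ∈ range K, c j) * t ^ K := le_rfl
      _ = (∑ j ∈ range K, c j + c K) * t ^ K := by ring

/-- lower bound on binomial coefficient -/
lemma npow_le_choose (n k : ℕ) (h : 2 * k ≤ n) :
    (n : ℝ) ^ k ≤ 2 ^ k * (k.factorial : ℝ) * (n.choose k : ℝ) := by
  have h1 : (n : ℝ) ^ k ≤ ∏ i ∈ range k, (2 * ((n - i : ℕ) : ℝ)) := by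
    rw [show (n:ℝ)^k = ∏ _i ∈ range k, (n:ℝ) by rw [Finset.prod_const, Finset.card_range]]
    refine Finset.prod_le_prod (fun i _ => Nat.cast_nonneg _) (fun i hi => ?_)
    simp only [mem_range] at hi
    have hni : n ≤ 2 * (n - i) := by omega
    exact_mod_cast hni
  have h2 : ∏ i ∈ range k, (2 * ((n - i : ℕ) : ℝ))
      = 2 ^ k * ((n.descFactorial k : ℕ) : ℝ) := by
    rw [Finset.prod_mul_distrib, Finset.prod_const, Finset.card_range,
      Nat.descFactorial_eq_prod_range]
    push_cast
    ring
  have h3 : ((n.descFactorial k : ℕ) : ℝ) = (k.factorial : ℝ) * (n.choose k : ℝ) := by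
    rw [Nat.descFactorial_eq_factorial_mul_choose]
    push_cast
    ring
  calc (n:ℝ)^k ≤ _ := h1
    _ = 2 ^ k * ((k.factorial : ℝ) * (n.choose k : ℝ)) := by rw [h2, h3]
    _ = 2 ^ k * (k.factorial : ℝ) * (n.choose k : ℝ) := by ring

lemma choose_real_prod (x k : ℕ) (h : k ≤ x) :
    (x.choose k : ℝ) * (k.factorial : ℝ) = ∏ j ∈ range k, ((x : ℝ) - j) := by
  have h1 : (x.descFactorial k : ℝ) = (k.factorial : ℝ) * (x.choose k : ℝ) := by
    rw [Nat.descFactorial_eq_factorial_mul_choose]; push_cast; ring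
  have h2 : ((x.descFactorial k : ℕ) : ℝ) = ∏ j ∈ range k, ((x : ℝ) - j) := by
    rw [Nat.descFactorial_eq_prod_range]
    push_cast [Nat.cast_prod]
    refine Finset.prod_congr rfl fun j hj => ?_
    simp only [mem_range] at hj
    rw [Nat.cast_sub (by omega)]
  rw [← h2, h1]; ring


set_option maxHeartbeats 1600000 in
/-- the main estimate in the case `2m ≤ n`, `2k ≤ n`. -/
lemma main_est (k : ℕ) (hk : 3 ≤ k) (n m : ℕ) (h2k : 2 * k ≤ n) (hm : 2 * m ≤ n) :
    |(omegaW n m k : ℝ) / (n.choose k : ℝ) - (((n - 2*m : ℕ) : ℝ) / n) ^ k| ≤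
      ((k.factorial : ℝ) * 2^k + 4*(k:ℝ)^2) / n * (((n - 2*m : ℕ) : ℝ)/n) ^ (k-2)
        + ((k:ℝ) * k.factorial * 2^k) / (n:ℝ)^2 := by
  set x := n - 2*m with hxdef
  have hn0 : 0 < n := by omega
  have hN : (0:ℝ) < n := by exact_mod_cast hn0
  have hxn : x ≤ n := by omega
  have hxN : (x:ℝ) ≤ n := by exact_mod_cast hxn
  have hx0 : (0:ℝ) ≤ x := Nat.cast_nonneg x
  set T : ℝ := (x:ℝ)/n with hT
  have hT0 : 0 ≤ T := by positivity
  have hT1 : T ≤ 1 := by rw [hT, div_le_one hN]; exact hxN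
  have hC : (0:ℝ) < (n.choose k : ℝ) := by
    exact_mod_cast Nat.choose_pos (by omega : k ≤ n)
  have hCb : (n:ℝ)^k ≤ 2^k * (k.factorial:ℝ) * (n.choose k:ℝ) := npow_le_choose n k h2k
  have hkR : (3:ℝ) ≤ (k:ℝ) := by exact_mod_cast hk
  set f : ℕ → ℝ := fun i => (-1:ℝ)^i * (m.choose i : ℝ) * (x.choose (k-2*i) : ℝ) with hf
  have hid : (omegaW n m k : ℝ) = ∑ i ∈ range (k/2+1), f i := by
    rw [omegaW_eq n m k hm]
    push_cast
    rfl
  set R : ℝ := ∑ i ∈ range (k/2 - 1), f (i+2) with hR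
  have hsplit : (omegaW n m k : ℝ) = R + f 1 + f 0 := by
    rw [hid, Finset.sum_range_succ']
    congr 1
    rw [show k/2 = (k/2 - 1) + 1 by omega, Finset.sum_range_succ']
  have hf0 : f 0 = (x.choose k : ℝ) := by simp [hf]
  have hf1 : f 1 = -((m:ℝ) * (x.choose (k-2) : ℝ)) := by
    simp [hf, Nat.choose_one_right]
  -- bound on the remainder R
  have hRb : |R| ≤ (k:ℝ) * (n:ℝ)^(k-2) := by
    calc |R| ≤ ∑ i ∈ range (k/2-1), |f (i+2)| := Finset.abs_sum_le_sum_abs _ _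
      _ ≤ ∑ _i ∈ range (k/2-1), (n:ℝ)^(k-2) := by
          refine Finset.sum_le_sum fun i hi => ?_
          simp only [mem_range] at hi
          have h1 : |f (i+2)| = (m.choose (i+2) : ℝ) * (x.choose (k - 2*(i+2)) : ℝ) := by
            rw [hf]
            rw [abs_mul, abs_mul, abs_pow, abs_neg, abs_one, one_pow, one_mul,
              Nat.abs_cast, Nat.abs_cast]
          rw [h1]
          have hnat : m.choose (i+2) * x.choose (k - 2*(i+2)) ≤ n ^ (k-2) := by
            calc m.choose (i+2) * x.choose (k - 2*(i+2))
                ≤ m ^ (i+2) * x ^ (k - 2*(i+2)) :=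
                  Nat.mul_le_mul (Nat.choose_le_pow _ _) (Nat.choose_le_pow _ _)
              _ ≤ n ^ (i+2) * n ^ (k - 2*(i+2)) :=
                  Nat.mul_le_mul (Nat.pow_le_pow_left (by omega) _)
                    (Nat.pow_le_pow_left (by omega) _)
              _ = n ^ ((i+2) + (k - 2*(i+2))) := (pow_add n _ _).symm
              _ ≤ n ^ (k-2) := Nat.pow_le_pow_right (by omega) (by omega)
          exact_mod_cast hnat
      _ = ((k/2 - 1 : ℕ):ℝ) * (n:ℝ)^(k-2) := by
          rw [Finset.sum_const, Finset.card_range, nsmul_eq_mul]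
      _ ≤ (k:ℝ) * (n:ℝ)^(k-2) := by
          refine mul_le_mul_of_nonneg_right ?_ (by positivity)
          exact_mod_cast (by omega : k/2 - 1 ≤ k)
  have hpow2 : (n:ℝ)^k = (n:ℝ)^(k-2) * (n:ℝ)^2 := by
    rw [← pow_add]; congr 1; omega
  -- Piece 1
  have hP1 : (m:ℝ) * (x.choose (k-2) : ℝ) / (n.choose k : ℝ)
      ≤ (k.factorial : ℝ) * 2^k / n * T^(k-2) := by
    rw [div_le_iff₀ hC]
    have e1 : (m:ℝ) * (x.choose (k-2):ℝ) ≤ (n:ℝ) * ((x:ℝ))^(k-2) := by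
      refine mul_le_mul ?_ ?_ (Nat.cast_nonneg _) (Nat.cast_nonneg _)
      · exact_mod_cast (by omega : m ≤ n)
      · exact_mod_cast Nat.choose_le_pow x (k-2)
    have e2 : (x:ℝ)^(k-2) = T^(k-2) * (n:ℝ)^(k-2) := by
      rw [hT, div_pow]
      field_simp
    refine e1.trans ?_
    rw [e2]
    have e4 : (n:ℝ) * (T^(k-2) * (n:ℝ)^(k-2)) = T^(k-2) * ((n:ℝ)^k / (n:ℝ)) := by
      rw [hpow2]; field_simp
    rw [e4]
    calc T^(k-2) * ((n:ℝ)^k / n)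
        ≤ T^(k-2) * ((2^k * (k.factorial:ℝ) * (n.choose k:ℝ))/n) := by
          gcongr
      _ = (k.factorial:ℝ)*2^k / n * T^(k-2) * (n.choose k:ℝ) := by ring
  -- Piece 2
  have hP2 : |R| / (n.choose k:ℝ) ≤ (k:ℝ) * (k.factorial:ℝ) * 2^k / (n:ℝ)^2 := by
    rw [div_le_iff₀ hC]
    refine hRb.trans ?_
    have e1 : (k:ℝ) * (n:ℝ)^(k-2) = (k:ℝ) * ((n:ℝ)^k / (n:ℝ)^2) := by
      rw [hpow2]; field_simp
    rw [e1]
    calc (k:ℝ) * ((n:ℝ)^k / (n:ℝ)^2)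
        ≤ (k:ℝ) * ((2^k * (k.factorial:ℝ) * (n.choose k:ℝ)) / (n:ℝ)^2) := by gcongr
      _ = (k:ℝ)*(k.factorial:ℝ)*2^k/(n:ℝ)^2 * (n.choose k:ℝ) := by ring
  -- Piece 3
  have hTpow : T^(k-1) ≤ T^(k-2) := pow_le_pow_of_le_one hT0 hT1 (by omega)
  have hP3 : |(x.choose k : ℝ)/(n.choose k:ℝ) - T^k| ≤ 2*(k:ℝ)^2 / n * T^(k-2) := by
    rcases lt_or_ge x k with hxk | hxk
    · rw [Nat.choose_eq_zero_of_lt hxk]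
      simp only [Nat.cast_zero, zero_div, zero_sub, abs_neg]
      rw [abs_of_nonneg (pow_nonneg hT0 _)]
      have e1 : T^k = T^2 * T^(k-2) := by rw [← pow_add]; congr 1; omega
      rw [e1]
      refine mul_le_mul_of_nonneg_right ?_ (pow_nonneg hT0 _)
      have hTk : T ≤ (k:ℝ)/n := by
        rw [hT]
        have : (x:ℝ) ≤ (k:ℝ) := by exact_mod_cast hxk.le
        gcongr
      calc T^2 = T*T := sq T
        _ ≤ ((k:ℝ)/n) * 1 := mul_le_mul hTk hT1 hT0 (by positivity)
        _ = (k:ℝ)/n := mul_one _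
        _ ≤ 2*(k:ℝ)^2/n := by
            gcongr
            nlinarith
    · have hfk : (0:ℝ) < (k.factorial:ℝ) := by exact_mod_cast k.factorial_pos
      have h2kR : 2*(k:ℝ) ≤ (n:ℝ) := by exact_mod_cast h2k
      have hratio : (x.choose k : ℝ)/(n.choose k:ℝ)
          = ∏ j ∈ range k, (((x:ℝ) - j)/((n:ℝ) - j)) := by
        rw [Finset.prod_div_distrib, ← choose_real_prod x k hxk,
          ← choose_real_prod n k (by omega)]
        rw [mul_div_mul_right _ _ (ne_of_gt hfk)]
      have hden : ∀ j, j < k → (n:ℝ)/2 ≤ (n:ℝ) - j := by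
        intro j hj
        have : (j:ℝ) ≤ k := by exact_mod_cast hj.le
        linarith
      have hdpos : ∀ j, j < k → (0:ℝ) < (n:ℝ) - j := by
        intro j hj
        have := hden j hj
        linarith
      have hA : ∀ j < k, 0 ≤ ((x:ℝ) - j)/((n:ℝ) - j) ∧ ((x:ℝ) - j)/((n:ℝ) - j) ≤ T := by
        intro j hj
        have hjx : (j:ℝ) ≤ (x:ℝ) := by exact_mod_cast (by omega : j ≤ x)
        constructor
        · exact div_nonneg (by linarith) (hdpos j hj).le
        · rw [hT, div_le_div_iff₀ (hdpos j hj) hN]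
          have hjn : (j:ℝ) * x ≤ (j:ℝ) * n :=
            mul_le_mul_of_nonneg_left hxN (Nat.cast_nonneg _)
          nlinarith
      have hCc : ∀ j < k, |((x:ℝ) - j)/((n:ℝ) - j) - T| ≤ 2*(j:ℝ)*((n:ℝ) - x)/(n:ℝ)^2 := by
        intro j hj
        have hdp := hdpos j hj
        have e1 : ((x:ℝ) - j)/((n:ℝ) - j) - T = -((j:ℝ)*((n:ℝ) - x)) / (((n:ℝ) - j)*n) := by
          rw [hT]
          field_simp
          ring
        rw [e1, abs_div, abs_neg]
        rw [abs_of_nonneg (by nlinarith : (0:ℝ) ≤ (j:ℝ)*((n:ℝ) - x)),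
          abs_of_nonneg (by nlinarith : (0:ℝ) ≤ ((n:ℝ) - j)*n)]
        rw [div_le_div_iff₀ (by nlinarith) (by positivity)]
        have hjk : (j:ℝ) ≤ k := by exact_mod_cast hj.le
        have hd := hden j hj
        have hnx0 : (0:ℝ) ≤ 2*(j:ℝ)*((n:ℝ)-x) :=
          mul_nonneg (by positivity) (by linarith)
        nlinarith [mul_le_mul_of_nonneg_left hd hnx0]
      have hmain := prod_est (fun j => ((x:ℝ) - j)/((n:ℝ) - j))
        (fun j => 2*(j:ℝ)*((n:ℝ) - x)/(n:ℝ)^2) T k hT0 hA hCc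
      rw [hratio]
      have hsum : ∑ j ∈ range k, 2*(j:ℝ)*((n:ℝ) - x)/(n:ℝ)^2 ≤ 2*(k:ℝ)^2/n := by
        calc ∑ j ∈ range k, 2*(j:ℝ)*((n:ℝ) - x)/(n:ℝ)^2 ≤ ∑ _j ∈ range k, (2*(k:ℝ)/n) := by
              refine Finset.sum_le_sum fun j hj => ?_
              simp only [mem_range] at hj
              have hjk : (j:ℝ) ≤ k := by exact_mod_cast hj.le
              rw [div_le_div_iff₀ (by positivity) hN]
              have h1 : (j:ℝ)*((n:ℝ)-(x:ℝ)) ≤ (k:ℝ)*n :=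
                mul_le_mul hjk (by linarith) (by linarith) (by positivity)
              nlinarith [mul_le_mul_of_nonneg_right h1 hN.le]
          _ = (k:ℝ) * (2*(k:ℝ)/n) := by
              rw [Finset.sum_const, Finset.card_range, nsmul_eq_mul]
          _ = 2*(k:ℝ)^2/n := by ring
      refine hmain.trans ?_
      calc (∑ j ∈ range k, 2*(j:ℝ)*((n:ℝ) - x)/(n:ℝ)^2) * T^(k-1)
          ≤ (2*(k:ℝ)^2/n) * T^(k-2) := by
            refine mul_le_mul hsum hTpow (pow_nonneg hT0 _) (by positivity)
        _ = 2*(k:ℝ)^2/n * T^(k-2) := rfl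
  -- combine
  have hcomb : (omegaW n m k : ℝ)/(n.choose k:ℝ) - T^k
      = ((x.choose k:ℝ)/(n.choose k:ℝ) - T^k)
        + (-((m:ℝ)*(x.choose (k-2):ℝ)))/(n.choose k:ℝ) + R/(n.choose k:ℝ) := by
    rw [hsplit, hf0, hf1]
    field_simp
    ring
  rw [hcomb]
  have t1 : |(-((m:ℝ)*(x.choose (k-2):ℝ)))/(n.choose k:ℝ)|
      = ((m:ℝ)*(x.choose (k-2):ℝ))/(n.choose k:ℝ) := by
    rw [abs_div, abs_neg,
      abs_of_nonneg (by positivity : (0:ℝ) ≤ (m:ℝ)*(x.choose (k-2):ℝ)),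
      abs_of_nonneg hC.le]
  have t2 : |R/(n.choose k:ℝ)| = |R|/(n.choose k:ℝ) := by
    rw [abs_div, abs_of_nonneg hC.le]
  have hTnn : 0 ≤ T^(k-2) := pow_nonneg hT0 _
  calc |((x.choose k:ℝ)/(n.choose k:ℝ) - T^k)
        + (-((m:ℝ)*(x.choose (k-2):ℝ)))/(n.choose k:ℝ) + R/(n.choose k:ℝ)|
      ≤ |((x.choose k:ℝ)/(n.choose k:ℝ) - T^k)
          + (-((m:ℝ)*(x.choose (k-2):ℝ)))/(n.choose k:ℝ)| + |R/(n.choose k:ℝ)| :=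
        abs_add_le _ _
    _ ≤ |(x.choose k:ℝ)/(n.choose k:ℝ) - T^k|
          + |(-((m:ℝ)*(x.choose (k-2):ℝ)))/(n.choose k:ℝ)| + |R/(n.choose k:ℝ)| := by
        linarith [abs_add_le ((x.choose k:ℝ)/(n.choose k:ℝ) - T^k)
          ((-((m:ℝ)*(x.choose (k-2):ℝ)))/(n.choose k:ℝ))]
    _ = |(x.choose k:ℝ)/(n.choose k:ℝ) - T^k|
          + ((m:ℝ)*(x.choose (k-2):ℝ))/(n.choose k:ℝ) + |R|/(n.choose k:ℝ) := by
        rw [t1, t2]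
    _ ≤ 2*(k:ℝ)^2 / n * T^(k-2) + (k.factorial:ℝ) * 2^k / n * T^(k-2)
          + (k:ℝ) * (k.factorial:ℝ) * 2^k / (n:ℝ)^2 :=
        add_le_add (add_le_add hP3 hP1) hP2
    _ = (2*(k:ℝ)^2 + (k.factorial:ℝ)*2^k)/n * T^(k-2)
          + (k:ℝ) * (k.factorial:ℝ) * 2^k / (n:ℝ)^2 := by ring
    _ ≤ ((k.factorial:ℝ)*2^k + 4*(k:ℝ)^2)/n * T^(k-2)
          + (k:ℝ) * (k.factorial:ℝ) * 2^k / (n:ℝ)^2 := by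
        refine add_le_add (mul_le_mul_of_nonneg_right ?_ hTnn) le_rfl
        rw [div_le_div_iff₀ hN hN]
        nlinarith

end OmegaAux

open OmegaAux

/-- There are positive constants `A_k`, `B_k` with
`|ω_{n,m,k}/C(n,k) − (1−2m/n)^k| ≤ (A_k/n)|1−2m/n|^{k−2} + B_k/n²`. -/
theorem abs_omegaW_div_choose_sub_le (k : ℕ) (hk : 3 ≤ k) :
    ∃ A B : ℝ, 0 < A ∧ 0 < B ∧ ∀ n m : ℕ, k ≤ n → m ≤ n →
      |(omegaW n m k : ℝ) / (n.choose k : ℝ) - (1 - 2 * (m : ℝ) / n) ^ k| ≤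
        A / n * |1 - 2 * (m : ℝ) / n| ^ (k - 2) + B / (n : ℝ) ^ 2 := by
  have hkR : (3:ℝ) ≤ (k:ℝ) := by exact_mod_cast hk
  have hfk : (0:ℝ) < (k.factorial:ℝ) := by exact_mod_cast k.factorial_pos
  refine ⟨(k.factorial:ℝ)*2^k + 4*(k:ℝ)^2, (k:ℝ)*(k.factorial:ℝ)*2^k + 8*(k:ℝ)^2,
    by positivity, by positivity, ?_⟩
  intro n m hn hm
  have hn0 : 0 < n := by omega
  have hN : (0:ℝ) < n := by exact_mod_cast hn0
  have hC : (0:ℝ) < (n.choose k:ℝ) := by exact_mod_cast Nat.choose_pos hn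
  have hmN : (m:ℝ) ≤ n := by exact_mod_cast hm
  rcases lt_or_ge n (2*k) with hsmall | hbig
  · -- small n : crude bound
    have hω : |(omegaW n m k : ℝ)| ≤ (n.choose k : ℝ) := by
      exact_mod_cast abs_omegaW_le n m k hm
    have hy1 : |1 - 2*(m:ℝ)/n| ≤ 1 := by
      rw [abs_le]
      constructor
      · have h2 : 2*(m:ℝ)/n ≤ 2 := by
          rw [div_le_iff₀ hN]; linarith
        linarith
      · have h3 : 0 ≤ 2*(m:ℝ)/n := by positivity
        linarith
    have ha : |(omegaW n m k : ℝ)/(n.choose k:ℝ)| ≤ 1 := by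
      rw [abs_div, abs_of_nonneg hC.le, div_le_one hC]; exact hω
    have hb : |(1 - 2*(m:ℝ)/n)^k| ≤ 1 := by
      rw [abs_pow]; exact pow_le_one₀ (abs_nonneg _) hy1
    have h1 : |(omegaW n m k : ℝ)/(n.choose k:ℝ) - (1 - 2*(m:ℝ)/n)^k| ≤ 2 := by
      calc |(omegaW n m k : ℝ)/(n.choose k:ℝ) - (1 - 2*(m:ℝ)/n)^k|
          = |(omegaW n m k : ℝ)/(n.choose k:ℝ) + -((1 - 2*(m:ℝ)/n)^k)| := by
            rw [sub_eq_add_neg]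
        _ ≤ |(omegaW n m k : ℝ)/(n.choose k:ℝ)| + |-((1 - 2*(m:ℝ)/n)^k)| := abs_add_le _ _
        _ = |(omegaW n m k : ℝ)/(n.choose k:ℝ)| + |(1 - 2*(m:ℝ)/n)^k| := by rw [abs_neg]
        _ ≤ 2 := by linarith
    have hnk : (n:ℝ) ≤ 2*(k:ℝ) := by exact_mod_cast hsmall.le
    have h2 : (2:ℝ) ≤ ((k:ℝ)*(k.factorial:ℝ)*2^k + 8*(k:ℝ)^2) / (n:ℝ)^2 := by
      rw [le_div_iff₀ (by positivity)]
      have hp : (0:ℝ) ≤ (k:ℝ)*(k.factorial:ℝ)*2^k := by positivity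
      nlinarith
    have h3 : (0:ℝ) ≤ ((k.factorial:ℝ)*2^k + 4*(k:ℝ)^2) / n * |1 - 2*(m:ℝ)/n|^(k-2) := by
      positivity
    linarith
  · rcases le_or_gt (2*m) n with hm2 | hm2
    · have key := main_est k hk n m hbig hm2
      have hy : ((n - 2*m:ℕ):ℝ)/n = 1 - 2*(m:ℝ)/n := by
        rw [Nat.cast_sub hm2]; push_cast; field_simp
      rw [hy] at key
      have hy0 : 0 ≤ 1 - 2*(m:ℝ)/n := by
        rw [← hy]; positivity
      rw [abs_of_nonneg hy0]
      refine key.trans ?_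
      have h8 : (0:ℝ) ≤ 8*(k:ℝ)^2/(n:ℝ)^2 := by positivity
      have : ((k:ℝ)*(k.factorial:ℝ)*2^k + 8*(k:ℝ)^2)/(n:ℝ)^2
          = (k:ℝ)*(k.factorial:ℝ)*2^k/(n:ℝ)^2 + 8*(k:ℝ)^2/(n:ℝ)^2 := by ring
      rw [this]
      linarith
    · set m' := n - m with hm'def
      have hm'n : m' ≤ n := by omega
      have hm2' : 2*m' ≤ n := by omega
      have hmm : n - m' = m := by omega
      have hsym : (omegaW n m k : ℤ) = (-1:ℤ)^k * omegaW n m' k := by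
        rw [← hmm]; exact omegaW_symm n m' k hm'n
      have hcast : (omegaW n m k : ℝ) = (-1:ℝ)^k * (omegaW n m' k:ℝ) := by
        exact_mod_cast hsym
      have key := main_est k hk n m' hbig hm2'
      have hy : ((n - 2*m':ℕ):ℝ)/n = 1 - 2*(m':ℝ)/n := by
        rw [Nat.cast_sub hm2']; push_cast; field_simp
      rw [hy] at key
      have hy0 : 0 ≤ 1 - 2*(m':ℝ)/n := by rw [← hy]; positivity
      have hmR : ((m':ℕ):ℝ) = (n:ℝ) - m := by
        rw [hm'def, Nat.cast_sub hm]
      have hyneg : 1 - 2*(m':ℝ)/n = -(1 - 2*(m:ℝ)/n) := by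
        rw [hmR]; field_simp; ring
      have hsq : ((-1:ℝ)^k)*((-1:ℝ)^k) = 1 := by rw [← mul_pow]; norm_num
      have e2 : (omegaW n m k:ℝ)/(n.choose k:ℝ) - (1 - 2*(m:ℝ)/n)^k
          = (-1:ℝ)^k * ((omegaW n m' k:ℝ)/(n.choose k:ℝ) - (1 - 2*(m':ℝ)/n)^k) := by
        have h1 : ((1 - 2*(m':ℝ)/n))^k = (-1:ℝ)^k * (1 - 2*(m:ℝ)/n)^k := by
          rw [hyneg, neg_pow]
        rw [hcast, h1]
        linear_combination ((1 - 2*(m:ℝ)/n)^k) * hsq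
      rw [e2, abs_mul, abs_pow, abs_neg, abs_one, one_pow, one_mul]
      rw [show |1 - 2*(m:ℝ)/n| = |1 - 2*(m':ℝ)/n| by rw [hyneg, abs_neg]]
      rw [abs_of_nonneg hy0]
      refine key.trans ?_
      have h8 : (0:ℝ) ≤ 8*(k:ℝ)^2/(n:ℝ)^2 := by positivity
      have : ((k:ℝ)*(k.factorial:ℝ)*2^k + 8*(k:ℝ)^2)/(n:ℝ)^2
          = (k:ℝ)*(k.factorial:ℝ)*2^k/(n:ℝ)^2 + 8*(k:ℝ)^2/(n:ℝ)^2 := by ring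
      rw [this]
      linarith
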